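/- Let Ha be a minimal tree projection of H1 w.r.t. H2. Then, for each hyperedge h ∈ edges(Ha) and each set C of nodes, C is an [h]-component of Ha if, and only if, C is an [h]-component of H1. -/

import Mathlib

/-- A hypergraph, identified (as in the paper) with its finite set of
finite hyperedges; its nodes are the vertices occurring in some hyperedge. -/
structure HGraph (α : Type*) where
  edges : Finset (Finset α)

namespace HGraph

variable {α : Type*}

/-- The set of nodes of a hypergraph. -/
def nodes (H : HGraph α) : Set α := {x | ∃ h ∈ H.edges, x ∈ h}

/-- `H1 ≤ H2`: every hyperedge of `H1` is contained in some hyperedge of `H2`. -/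
def HLe (H1 H2 : HGraph α) : Prop := ∀ h1 ∈ H1.edges, ∃ h2 ∈ H2.edges, h1 ⊆ h2

/-- `H` is contained in `H'`. -/
def Contained (H H' : HGraph α) : Prop :=
  ∀ h ∈ H.edges, h ∉ H'.edges → ∃ h' ∈ H'.edges, h' ∉ H.edges ∧ h ⊆ h'

/-- `H` is properly contained in `H'`. -/
def ProperlyContained (H H' : HGraph α) : Prop := H.Contained H' ∧ H ≠ H'

/-- A hypergraph is reduced if no hyperedge is a proper subset of another one. -/
def Reduced (H : HGraph α) : Prop := ∀ h ∈ H.edges, ∀ h' ∈ H.edges, ¬ h ⊂ h'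

end HGraph

/-- The type of hyperedges of `H`. -/
abbrev Hyperedge {α : Type*} (H : HGraph α) := {h : Finset α // h ∈ H.edges}

/-- A join tree for a hypergraph `H`: a tree whose vertices are the hyperedges of `H`
such that, for every node `X`, the hyperedges containing `X` induce a connected subtree. -/
structure JoinTree {α : Type*} (H : HGraph α) where
  T : SimpleGraph (Hyperedge H)
  isTree : T.IsTree
  node_connected : ∀ X : α, (T.induce {h : Hyperedge H | X ∈ h.1}).Preconnected

/-- A hypergraph is acyclic iff it has a join tree. -/
def HGraph.Acyclic {α : Type*} (H : HGraph α) : Prop := Nonempty (JoinTree H)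

/-- `Ha` is a tree projection of `H1` w.r.t. `H2`. -/
def IsTreeProjection {α : Type*} (H1 H2 Ha : HGraph α) : Prop :=
  Ha.Acyclic ∧ H1.HLe Ha ∧ Ha.HLe H2

/-- `Ha` is a minimal tree projection of `H1` w.r.t. `H2`. -/
def IsMinimalTreeProjection {α : Type*} (H1 H2 Ha : HGraph α) : Prop :=
  IsTreeProjection H1 H2 Ha ∧
  ∀ Ha' : HGraph α, IsTreeProjection H1 H2 Ha' → ¬ Ha'.ProperlyContained Ha

namespace HGraph

variable {α : Type*}

/-- `X` is `[V]`-adjacent to `Y`: some hyperedge contains both outside of `V`. -/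
def Adj (H : HGraph α) (V : Set α) (X Y : α) : Prop :=
  ∃ h ∈ H.edges, X ∈ h ∧ Y ∈ h ∧ X ∉ V ∧ Y ∉ V

/-- There is a `[V]`-path from `X` to `Y`. -/
def VPath (H : HGraph α) (V : Set α) : α → α → Prop :=
  Relation.ReflTransGen (H.Adj V)

/-- The set `W` is `[V]`-connected. -/
def VConnected (H : HGraph α) (V W : Set α) : Prop :=
  ∀ X ∈ W, ∀ Y ∈ W, H.VPath V X Y

/-- `C` is a `[V]`-component of `H`: a maximal `[V]`-connected nonempty subset
of `nodes(H) \ V`. -/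
def IsComponent (H : HGraph α) (V C : Set α) : Prop :=
  C.Nonempty ∧ C ⊆ H.nodes \ V ∧ H.VConnected V C ∧
  ∀ C' : Set α, C ⊆ C' → C' ⊆ H.nodes \ V → H.VConnected V C' → C' = C

/-- The frontier `Fr(C,H)`: the union of all hyperedges meeting `C`. -/
def Fr (H : HGraph α) (C : Set α) : Set α :=
  {x | ∃ h ∈ H.edges, x ∈ h ∧ ∃ y ∈ C, y ∈ h}

/-- The border `∂(C,H) = Fr(C,H) \ C`. -/
def border (H : HGraph α) (C : Set α) : Set α := H.Fr C \ C

/-- `X` `[V]`-touches the set `W`: `X` is `[∅]`-adjacent to some node `Z` from which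
there is a `[V]`-path to some node of `W`. -/
def Touches (H : HGraph α) (V : Set α) (X : α) (W : Set α) : Prop :=
  ∃ Z : α, H.Adj ∅ X Z ∧ ∃ Y ∈ W, H.VPath V Z Y

end HGraph

namespace JoinTree

variable {α : Type*} {H : HGraph α}

/-- The vertices of the subtree rooted at `h_s` when the join tree is rooted at
(the side of) `h_r`, for adjacent vertices `h_r`, `h_s`. -/
def subtreeVerts (JT : JoinTree H) (h_r h_s : Hyperedge H) : Set (Hyperedge H) :=
  {v | JT.T.dist v h_s < JT.T.dist v h_r}

/-- The nodes occurring in the vertices of the subtree rooted at `h_s` (w.r.t. `h_r`). -/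
def subtreeNodes (JT : JoinTree H) (h_r h_s : Hyperedge H) : Set α :=
  {x | ∃ v ∈ JT.subtreeVerts h_r h_s, x ∈ v.1}

/-- `h_s` is a child of `h_r` in the join tree rooted at `root`. -/
def IsChild (JT : JoinTree H) (root h_r h_s : Hyperedge H) : Prop :=
  JT.T.Adj h_r h_s ∧ JT.T.dist root h_r < JT.T.dist root h_s

end JoinTree

/-- The sub-hypergraph of `H1` induced by the node set `N` is `[∅]`-connected. -/
def InducedConn {α : Type*} (H1 : HGraph α) (N : Set α) : Prop :=
  ∀ X ∈ N, ∀ Y ∈ N,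
    Relation.ReflTransGen
      (fun a b => a ∈ N ∧ b ∈ N ∧ ∃ h ∈ H1.edges, a ∈ h ∧ b ∈ h) X Y

/-- A join tree of `Ha` is `H1`-connected. -/
def JoinTree.IsConnectedFor {α : Type*} {Ha : HGraph α} (JT : JoinTree Ha)
    (H1 : HGraph α) : Prop :=
  ∀ h_r h_s : Hyperedge Ha, JT.T.Adj h_r h_s → InducedConn H1 (JT.subtreeNodes h_r h_s)

/-- `C` is the component `C⊤(h)` associated with vertex `h` of the join tree rooted at
`root`: conventionally `nodes(H1)` for the root, and otherwise the unique
`[h_p]`-component of `H1` (for `h_p` the parent of `h`) determined by the subtree at `h`. -/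
def CtopAt {α : Type*} (H1 : HGraph α) {Ha : HGraph α} (JT : JoinTree Ha)
    (root h : Hyperedge Ha) (C : Set α) : Prop :=
  (h = root ∧ C = H1.nodes) ∨
  ∃ h_p : Hyperedge Ha, JT.IsChild root h_p h ∧ H1.IsComponent (h_p.1 : Set α) C ∧
    JT.subtreeNodes h_p h = C ∪ ((h.1 : Set α) ∩ (h_p.1 : Set α))

/-- The join tree `JT` of `Ha`, rooted at `root`, is an `H1`-component tree. -/
def JoinTree.IsComponentTreeFor {α : Type*} {Ha : HGraph α} (JT : JoinTree Ha)
    (H1 : HGraph α) (root : Hyperedge Ha) : Prop :=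
  (∀ h_r h_s : Hyperedge Ha, JT.IsChild root h_r h_s →
    (∃! C : Set α, H1.IsComponent (h_r.1 : Set α) C ∧
      JT.subtreeNodes h_r h_s = C ∪ ((h_s.1 : Set α) ∩ (h_r.1 : Set α))) ∧
    (∀ C : Set α, H1.IsComponent (h_r.1 : Set α) C →
      JT.subtreeNodes h_r h_s = C ∪ ((h_s.1 : Set α) ∩ (h_r.1 : Set α)) →
      ((h_s.1 : Set α) ∩ C).Nonempty ∧ (h_s.1 : Set α) ⊆ H1.Fr C)) ∧
  (∀ h_r : Hyperedge Ha, ∀ Ctop : Set α, CtopAt H1 JT root h_r Ctop →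
    ∀ C_r : Set α, H1.IsComponent (h_r.1 : Set α) C_r → C_r ⊆ Ctop →
    ∃! h_s : Hyperedge Ha, JT.IsChild root h_r h_s ∧
      JT.subtreeNodes h_r h_s = C_r ∪ ((h_s.1 : Set α) ∩ (h_r.1 : Set α)))

/-! ### The Robber and Captain game -/

/-- A position for the Captain: a set of nodes included in some hyperedge of `H2`. -/
def IsPosition {α : Type*} (H2 : HGraph α) (M : Set α) : Prop :=
  ∃ h2 ∈ H2.edges, M ⊆ (h2 : Set α)

/-- A configuration of the game `R&C(H1,H2)`. -/
def IsConfig {α : Type*} (H1 H2 : HGraph α) (M C : Set α) : Prop :=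
  IsPosition H2 M ∧ (H1.IsComponent M C ∨ C = ∅ ∨ (M = ∅ ∧ C = H1.nodes))

/-- `C_j` is an `[(M_i,C_i),M_j]`-escape component: an `[M_j]`-component of `H1`
such that `C_i ∪ C_j` is `[M_i ∩ M_j]`-connected. -/
def EscapeComp {α : Type*} (H1 : HGraph α) (M_i C_i M_j C_j : Set α) : Prop :=
  H1.IsComponent M_j C_j ∧ H1.VConnected (M_i ∩ M_j) (C_i ∪ C_j)

/-- The escape door `ED((M_i,C),M') = ∂(C,H1) \ M'` (it only depends on `C` and `M'`). -/
def escapeDoor {α : Type*} (H1 : HGraph α) (C M' : Set α) : Set α :=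
  H1.border C \ M'

/-- `σ` is a strategy for the Captain in `R&C(H1,H2)`. -/
def IsStrategy {α : Type*} (H1 H2 : HGraph α) (σ : Set α → Set α → Set α) : Prop :=
  ∀ M C : Set α, IsConfig H1 H2 M C → C ≠ ∅ →
    IsPosition H2 (σ M C) ∧ σ M C ⊆ H1.Fr C

/-- One step of the game played according to `σ`: from configuration `p` the Captain
moves to `σ p.1 p.2`, and the Robber either selects an escape component or is captured. -/
def GameStep {α : Type*} (H1 : HGraph α) (σ : Set α → Set α → Set α)
    (p q : Set α × Set α) : Prop :=
  p.2 ≠ ∅ ∧ q.1 = σ p.1 p.2 ∧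
    (EscapeComp H1 p.1 p.2 q.1 q.2 ∨
      ((∀ C : Set α, ¬ EscapeComp H1 p.1 p.2 q.1 C) ∧ q.2 = ∅))

/-- `p` is a vertex of the game tree `T(σ)` (reachable from the root `(∅, nodes(H1))`). -/
def InGameTree {α : Type*} (H1 : HGraph α) (σ : Set α → Set α → Set α)
    (p : Set α × Set α) : Prop :=
  Relation.ReflTransGen (GameStep H1 σ) (∅, H1.nodes) p

/-- `σ` is winning: the game tree `T(σ)` is finite, i.e., there is no infinite play. -/
def Winning {α : Type*} (H1 : HGraph α) (σ : Set α → Set α → Set α) : Prop :=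
  ¬ ∃ f : ℕ → Set α × Set α, f 0 = (∅, H1.nodes) ∧ ∀ n, GameStep H1 σ (f n) (f (n + 1))

/-- `M_j` is a monotone move in `(M_i, C_i)`. -/
def MonotoneMove {α : Type*} (H1 : HGraph α) (M_i C_i M_j : Set α) : Prop :=
  ∀ C : Set α, EscapeComp H1 M_i C_i M_j C → C ⊆ C_i

/-- `σ` is a monotone strategy. -/
def MonotoneStrategy {α : Type*} (H1 : HGraph α) (σ : Set α → Set α → Set α) : Prop :=
  ∀ p q : Set α × Set α, InGameTree H1 σ p → GameStep H1 σ p q →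
    MonotoneMove H1 p.1 p.2 q.1




/-! ### Auxiliary machinery -/

open Classical

noncomputable section

/-- lift a chain along a function. -/
private lemma chain_lift {ι κ : Type*} {R : ι → ι → Prop} {R' : κ → κ → Prop} (f : ι → κ)
    (h : ∀ a b, R a b → Relation.ReflTransGen R' (f a) (f b)) {a b : ι}
    (hab : Relation.ReflTransGen R a b) : Relation.ReflTransGen R' (f a) (f b) := by
  induction hab with
  | refl => exact .refl
  | tail _ hbc ih => exact ih.trans (h _ _ hbc)

private lemma rtg_symm' {β : Type*} {r : β → β → Prop} (hs : Symmetric r) {a b : β}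
    (h : Relation.ReflTransGen r a b) : Relation.ReflTransGen r b a := by
  haveI : Std.Symm r := ⟨fun _ _ h => hs h⟩
  exact Std.Symm.symm _ _ h

/-- A rooted tree presented by a parent function. -/
structure PTree (ι : Type*) where
  r : ι
  p : ι → ι
  root_fix : p r = r
  reach : ∀ v, ∃ n, p^[n] v = r

namespace PTree

variable {ι : Type*} (P : PTree ι)

/-- depth -/
def ρ (v : ι) : ℕ := Nat.find (P.reach v)

lemma iter_rho (v : ι) : P.p^[P.ρ v] v = P.r := Nat.find_spec (P.reach v)

lemma rho_r : P.ρ P.r = 0 := by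
  simpa [ρ, Nat.find_eq_zero] using rfl

lemma eq_r_of_rho_eq_zero {v : ι} (h : P.ρ v = 0) : v = P.r := by
  have := P.iter_rho v
  rwa [h, Function.iterate_zero_apply] at this

lemma eq_r_of_fix {v : ι} (h : P.p v = v) : v = P.r := by
  obtain ⟨n, hn⟩ := P.reach v
  have key : ∀ m, P.p^[m] v = v := by
    intro m
    induction m with
    | zero => simp
    | succ m ih => rw [Function.iterate_succ_apply, h]; exact ih
  rw [← hn, key n]

lemma rho_p {v : ι} (h : v ≠ P.r) : P.ρ v = P.ρ (P.p v) + 1 := by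
  have h0 : P.ρ v ≠ 0 := fun hh => h (P.eq_r_of_rho_eq_zero hh)
  have h1 : P.ρ (P.p v) ≤ P.ρ v - 1 := by
    apply Nat.find_le
    have := P.iter_rho v
    rw [← Nat.succ_pred_eq_of_pos (Nat.pos_of_ne_zero h0), Function.iterate_succ_apply] at this
    exact this
  have h2 : P.ρ v ≤ P.ρ (P.p v) + 1 := by
    apply Nat.find_le
    rw [Function.iterate_succ_apply]
    exact P.iter_rho (P.p v)
  omega

/-- adjacency induced by the parent function -/
def adjP (a b : ι) : Prop := a ≠ b ∧ (P.p a = b ∨ P.p b = a)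

lemma adjP_symm {a b : ι} (h : P.adjP a b) : P.adjP b a := ⟨h.1.symm, h.2.symm⟩

/-- the graph of a parent tree -/
def graph : SimpleGraph ι where
  Adj := P.adjP
  symm := ⟨fun _ _ h => P.adjP_symm h⟩
  loopless := ⟨fun a h => h.1 rfl⟩

lemma graph_adj {a b : ι} : P.graph.Adj a b ↔ P.adjP a b := Iff.rfl

lemma parent_of_adjP_max {a b : ι} (h : P.adjP a b) (hba : P.ρ b ≤ P.ρ a) : P.p a = b := by
  rcases h.2 with h1 | h1
  · exact h1
  · exfalso
    have hbr : b ≠ P.r := by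
      intro hb
      apply h.1
      subst hb
      rw [P.root_fix] at h1
      exact h1.symm
    have := P.rho_p hbr
    rw [h1] at this
    omega

lemma connected [Nonempty ι] : P.graph.Connected := by
  have key : ∀ v, P.graph.Reachable v P.r := by
    intro v
    have : ∀ n v, P.ρ v ≤ n → P.graph.Reachable v P.r := by
      intro n
      induction n with
      | zero => intro v hv; rw [P.eq_r_of_rho_eq_zero (Nat.le_zero.mp hv)]
      | succ n ih =>
        intro v hv
        by_cases hr : v = P.r
        · rw [hr]
        · have hstep : P.graph.Adj v (P.p v) := by
            refine ⟨fun hh => hr (P.eq_r_of_fix hh.symm), Or.inl rfl⟩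
          have := P.rho_p hr
          exact (hstep.reachable).trans (ih (P.p v) (by omega))
    exact this (P.ρ v) v le_rfl
  constructor
  intro u v
  exact (key u).trans (key v).symm

lemma acyclic : P.graph.IsAcyclic := by
  intro v c hc
  -- pick a vertex of maximal depth on the cycle
  have hsupne : c.support ≠ [] := SimpleGraph.Walk.support_ne_nil c
  obtain ⟨m, hm_mem, hm_max⟩ : ∃ m ∈ c.support, ∀ u ∈ c.support, P.ρ u ≤ P.ρ m := by
    classical
    obtain ⟨m, hm, hmax⟩ := c.support.toFinset.exists_max_image P.ρ
      (by simp [List.toFinset_nonempty_iff, hsupne])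
    exact ⟨m, List.mem_toFinset.mp hm, fun u hu => hmax u (List.mem_toFinset.mpr hu)⟩
  set c' := c.rotate (u := m) hm_mem with hc'def
  have hc' : c'.IsCycle := hc.rotate hm_mem
  have hmem' : ∀ u ∈ c'.support, P.ρ u ≤ P.ρ m := by
    intro u hu
    apply hm_max
    have hperm := SimpleGraph.Walk.support_rotate c (u := m) hm_mem
    rcases (SimpleGraph.Walk.mem_support_iff _).mp hu with h | h
    · rwa [h]
    · exact List.mem_of_mem_tail (hperm.mem_iff.mp h)
  -- destructure the cycle
  cases hw : c' with
  | nil => rw [hw] at hc'; exact hc'.ne_nil rfl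
  | @cons _ a _ hadj q =>
    rw [hw] at hc' hmem'
    rw [SimpleGraph.Walk.cons_isCycle_iff] at hc'
    obtain ⟨hq_path, hq_edge⟩ := hc'
    -- penultimate vertex via reverse of q
    cases hqr : q.reverse with
    | nil => exact P.graph.loopless.irrefl _ hadj
    | @cons _ b _ hadj2 q2 =>
      -- hadj2 : P.graph.Adj m b
      have hb_mem : b ∈ q.support := by
        have : b ∈ q.reverse.support := by rw [hqr]; simp
        rwa [SimpleGraph.Walk.support_reverse, List.mem_reverse] at this
      have ha_le : P.ρ a ≤ P.ρ m := hmem' a (by simp)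
      have hb_le : P.ρ b ≤ P.ρ m := hmem' b (by simp [hb_mem])
      have hpa : P.p m = a := P.parent_of_adjP_max hadj ha_le
      have hpb : P.p m = b := P.parent_of_adjP_max hadj2 hb_le
      have hab : a = b := hpa ▸ hpb
      -- last edge of q is s(m, b) = s(m, a), contradicting hq_edge
      apply hq_edge
      have : s(m, b) ∈ q.reverse.edges := by rw [hqr]; simp
      rw [SimpleGraph.Walk.edges_reverse, List.mem_reverse] at this
      rwa [← hab] at this

lemma isTree [Nonempty ι] : P.graph.IsTree := ⟨P.connected, P.acyclic⟩

end PTree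

section Helpers

variable {ι : Type*} {G : SimpleGraph ι} {S : Set ι}

private lemma chain_to_walk {a b : ι}
    (hab : Relation.ReflTransGen (fun c d => c ∈ S ∧ d ∈ S ∧ G.Adj c d) a b) (ha : a ∈ S) :
    ∃ w : G.Walk a b, ∀ v ∈ w.support, v ∈ S := by
  induction hab with
  | refl => exact ⟨.nil, by simpa using ha⟩
  | tail _ h ih =>
    obtain ⟨w, hw⟩ := ih
    refine ⟨w.concat h.2.2, ?_⟩
    intro v hv
    rw [SimpleGraph.Walk.support_concat, List.mem_append] at hv
    rcases hv with hv | hv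
    · exact hw v hv
    · simp at hv; rw [hv]; exact h.2.1

private lemma walk_to_chain {a b : ι} (w : G.Walk a b) (hw : ∀ v ∈ w.support, v ∈ S) :
    Relation.ReflTransGen (fun c d => c ∈ S ∧ d ∈ S ∧ G.Adj c d) a b := by
  induction w with
  | nil => exact .refl
  | @cons u v x h q ih =>
    refine Relation.ReflTransGen.head ⟨?_, ?_, h⟩ (ih ?_)
    · exact hw u (by simp)
    · exact hw v (by simp)
    · intro z hz; exact hw z (by simp [hz])

private lemma induce_walk_to_chain {a b : S} (w : (G.induce S).Walk a b) :
    Relation.ReflTransGen (fun c d => c ∈ S ∧ d ∈ S ∧ G.Adj c d) a.1 b.1 := by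
  induction w with
  | nil => exact .refl
  | @cons u v x h q ih =>
    exact Relation.ReflTransGen.head ⟨u.2, v.2, h⟩ ih

private lemma chain_to_induce_reachable {a b : ι}
    (hab : Relation.ReflTransGen (fun c d => c ∈ S ∧ d ∈ S ∧ G.Adj c d) a b)
    (ha : a ∈ S) :
    ∀ hb : b ∈ S, (G.induce S).Reachable ⟨a, ha⟩ ⟨b, hb⟩ := by
  induction hab with
  | refl => intro hb; rfl
  | @tail u v _ h ih =>
    intro hv
    have hu : u ∈ S := h.1
    have hadj : (G.induce S).Adj ⟨u, hu⟩ ⟨v, hv⟩ := h.2.2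
    exact (ih hu).trans hadj.reachable

end Helpers

section Extraction

variable {V : Type*} {T : SimpleGraph V}

private lemma isPath_concat {u v w : V} {p : T.Walk u v} (hp : p.IsPath) (hw : w ∉ p.support)
    (h : T.Adj v w) : (p.concat h).IsPath := by
  rw [SimpleGraph.Walk.isPath_def, SimpleGraph.Walk.support_concat]
  rw [List.nodup_append]
  refine ⟨(SimpleGraph.Walk.isPath_def _).mp hp, List.nodup_singleton _, ?_⟩
  intro z hz z' hz'
  simp only [List.mem_singleton] at hz'
  subst hz'
  exact fun hzz => hw (hzz ▸ hz)

/-- From a tree and a chosen root, extract a parent function whose graph is `T`. -/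
private lemma exists_ptree_of_isTree (hT : T.IsTree) (r : V) :
    ∃ P : PTree V, P.r = r ∧ P.graph = T := by
  have hconn : T.Connected := hT.isConnected
  have hEU : ∀ v w, ∃! p : T.Walk v w, p.IsPath :=
    (SimpleGraph.isTree_iff_existsUnique_path.mp hT).2
  classical
  -- membership in a shortest path forces equality at full distance
  have hmem_dist : ∀ (a b : V) (w : T.Walk r a), w.length = T.dist r a → b ∈ w.support →
      T.dist r b = T.dist r a → b = a := by
    intro a b w hw hb hdb
    have h1 : T.dist r b ≤ (w.takeUntil b hb).length := SimpleGraph.dist_le _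
    have h2 : T.dist b a ≤ (w.dropUntil b hb).length := SimpleGraph.dist_le _
    have h3 : (w.takeUntil b hb).length + (w.dropUntil b hb).length = w.length := by
      rw [← SimpleGraph.Walk.length_append, SimpleGraph.Walk.take_spec]
    have h4 : T.dist r a ≤ T.dist r b + T.dist b a := hconn.dist_triangle
    have h5 : T.dist b a = 0 := by omega
    exact ((hconn.dist_eq_zero_iff).mp h5)
  -- adjacent vertices have different distances from r
  have hne_dist : ∀ a b, T.Adj a b → T.dist r a ≠ T.dist r b := by
    intro a b hadj heq
    obtain ⟨w, hwp, hwl⟩ := hconn.exists_path_of_dist r a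
    have hb : b ∉ w.support := by
      intro hb
      exact hadj.ne' (hmem_dist a b w hwl hb heq.symm) |>.elim
    have hP2 : (w.concat hadj).IsPath := isPath_concat hwp hb hadj
    obtain ⟨wb, hwbp, hwbl⟩ := hconn.exists_path_of_dist r b
    have := (hEU r b).unique hP2 hwbp
    have hlen : (w.concat hadj).length = wb.length := by rw [this]
    rw [SimpleGraph.Walk.length_concat, hwl, hwbl, ← heq] at hlen
    omega
  -- existence of a parent
  have hex : ∀ v, v ≠ r → ∃ q, T.Adj v q ∧ T.dist r q + 1 = T.dist r v := by
    intro v hv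
    obtain ⟨w, hwp, hwl⟩ := hconn.exists_path_of_dist r v
    have hd0 : T.dist r v ≠ 0 := by
      intro h0
      exact hv ((hconn.dist_eq_zero_iff).mp h0).symm
    cases hqr : w.reverse with
    | nil =>
      exfalso
      have : w.length = 0 := by
        have := congrArg SimpleGraph.Walk.length hqr
        simpa using this
      omega
    | @cons _ x _ hadj q =>
      refine ⟨x, hadj, ?_⟩
      have hlq : q.length + 1 = T.dist r v := by
        have h' := congrArg SimpleGraph.Walk.length hqr
        rw [SimpleGraph.Walk.length_reverse, hwl] at h'
        simpa using h'.symm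
      have hle : T.dist r x ≤ q.length := by
        have := SimpleGraph.dist_le q.reverse
        simpa using this
      have hge : T.dist r v ≤ T.dist r x + 1 := by
        have h1 : T.dist x v ≤ 1 := by
          have := SimpleGraph.dist_le (SimpleGraph.Walk.cons hadj.symm SimpleGraph.Walk.nil)
          simpa using this
        have := hconn.dist_triangle (u := r) (v := x) (w := v)
        omega
      omega
  -- uniqueness of the parent
  have huniq : ∀ v, v ≠ r → ∀ q1 q2, (T.Adj v q1 ∧ T.dist r q1 + 1 = T.dist r v) →
      (T.Adj v q2 ∧ T.dist r q2 + 1 = T.dist r v) → q1 = q2 := by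
    intro v hv q1 q2 ⟨ha1, hd1⟩ ⟨ha2, hd2⟩
    obtain ⟨w1, hw1p, hw1l⟩ := hconn.exists_path_of_dist r q1
    obtain ⟨w2, hw2p, hw2l⟩ := hconn.exists_path_of_dist r q2
    have hv1 : v ∉ w1.support := by
      intro hmem
      have : T.dist r v ≤ (w1.takeUntil v hmem).length := SimpleGraph.dist_le _
      have h2 : (w1.takeUntil v hmem).length ≤ w1.length := SimpleGraph.Walk.length_takeUntil_le _ _
      omega
    have hv2 : v ∉ w2.support := by
      intro hmem
      have : T.dist r v ≤ (w2.takeUntil v hmem).length := SimpleGraph.dist_le _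
      have h2 : (w2.takeUntil v hmem).length ≤ w2.length := SimpleGraph.Walk.length_takeUntil_le _ _
      omega
    have hP1 : (w1.concat ha1.symm).IsPath := isPath_concat hw1p hv1 ha1.symm
    have hP2 : (w2.concat ha2.symm).IsPath := isPath_concat hw2p hv2 ha2.symm
    have heq := (hEU r v).unique hP1 hP2
    obtain ⟨hq, -⟩ := SimpleGraph.Walk.concat_inj heq
    exact hq
  -- define the parent function
  let p : V → V := fun v => if hv : v = r then r else Classical.choose (hex v hv)
  have hp_spec : ∀ v (hv : v ≠ r), T.Adj v (p v) ∧ T.dist r (p v) + 1 = T.dist r v := by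
    intro v hv
    simp only [p, dif_neg hv]
    exact Classical.choose_spec (hex v hv)
  have hp_r : p r = r := by simp [p]
  have hreach : ∀ v, ∃ n, p^[n] v = r := by
    intro v
    have : ∀ n v, T.dist r v ≤ n → ∃ m, p^[m] v = r := by
      intro n
      induction n with
      | zero =>
        intro v hv
        have : v = r := ((hconn.dist_eq_zero_iff).mp (Nat.le_zero.mp hv)).symm
        exact ⟨0, by simp [this]⟩
      | succ n ih =>
        intro v hv
        by_cases hr : v = r
        · exact ⟨0, by simp [hr]⟩
        · have hs := hp_spec v hr
          obtain ⟨m, hm⟩ := ih (p v) (by omega)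
          exact ⟨m + 1, by rw [Function.iterate_succ_apply]; exact hm⟩
    exact this (T.dist r v) v le_rfl
  refine ⟨⟨r, p, hp_r, hreach⟩, rfl, ?_⟩
  ext a b
  show (a ≠ b ∧ (p a = b ∨ p b = a)) ↔ T.Adj a b
  rw [Iff.comm]
  constructor
  · intro hadj
    refine ⟨hadj.ne, ?_⟩
    have hne := hne_dist a b hadj
    rcases Nat.lt_or_ge (T.dist r a) (T.dist r b) with hlt | hge
    · right
      have hbr : b ≠ r := by
        intro hb
        rw [hb] at hlt
        simp [SimpleGraph.dist_self] at hlt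
      apply huniq b hbr a (p b) ⟨hadj.symm, ?_⟩ (hp_spec b hbr) |>.symm
      have h1 : T.dist r b ≤ T.dist r a + 1 := by
        have h2 : T.dist a b ≤ 1 := by
          have := SimpleGraph.dist_le (SimpleGraph.Walk.cons hadj SimpleGraph.Walk.nil)
          simpa using this
        have := hconn.dist_triangle (u := r) (v := a) (w := b)
        omega
      omega
    · left
      have hlt : T.dist r b < T.dist r a := by omega
      have har : a ≠ r := by
        intro ha
        rw [ha] at hlt
        simp [SimpleGraph.dist_self] at hlt
      apply huniq a har (p a) b (hp_spec a har) ⟨hadj, ?_⟩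
      have h1 : T.dist r a ≤ T.dist r b + 1 := by
        have h2 : T.dist b a ≤ 1 := by
          have := SimpleGraph.dist_le (SimpleGraph.Walk.cons hadj.symm SimpleGraph.Walk.nil)
          simpa using this
        have := hconn.dist_triangle (u := r) (v := b) (w := a)
        omega
      omega
  · rintro ⟨hne, h | h⟩
    · have har : a ≠ r := by
        intro ha; rw [ha, hp_r] at h; exact hne (ha.trans h)
      exact h ▸ (hp_spec a har).1
    · have hbr : b ≠ r := by
        intro hb; rw [hb, hp_r] at h; exact hne (h.symm.trans hb.symm)
      exact (h ▸ (hp_spec b hbr).1).symm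

end Extraction

section LemB

universe u v

/-- Join invariant for an indexed family of hyperedges on a parent tree. -/
private def JoinInvP {α : Type u} {ι : Type v} (P : PTree ι) (π : ι → Finset α) : Prop :=
  ∀ (x : α) (a b : ι), x ∈ π a → x ∈ π b →
    Relation.ReflTransGen (fun c d => x ∈ π c ∧ x ∈ π d ∧ P.adjP c d) a b

private lemma lemB {α : Type u} [DecidableEq α] :
    ∀ (μ : ℕ) (ι : Type v) [Fintype ι] (P : PTree ι) (π : ι → Finset α) (U : Finset α),
      (∀ i, π i ⊆ U) → JoinInvP P π →
      (∑ i, (U.card + 1 - (π i).card)) ≤ μ →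
      ∃ H'' : HGraph α, H''.Acyclic ∧
        (∀ g ∈ H''.edges, ∃ i, π i = g) ∧
        (∀ i, ∃ g ∈ H''.edges, π i ⊆ g) ∧
        (∀ g ∈ H''.edges, ∀ g' ∈ H''.edges, g ⊆ g' → g = g') := by
  intro μ
  induction μ using Nat.strong_induction_on with
  | _ μ IH =>
  intro ι instFin P π U hU hJ hμ
  classical
  by_cases hdb : ∃ i j, i ≠ j ∧ π i ⊆ π j
  · obtain ⟨i, j, hij, hsub⟩ := hdb
    have htree : P.graph.IsTree := haveI : Nonempty ι := ⟨i⟩; P.isTree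
    have hEU := (SimpleGraph.isTree_iff_existsUnique_path.mp htree).2
    obtain ⟨w0, hw0p, hw0u⟩ := hEU i j
    cases hw : w0 with
    | nil => exact absurd rfl hij
    | @cons _ n _ hadj q =>
      rw [hw] at hw0u
      have hadjP_in : P.adjP i n := hadj
      have hn_all : π i ⊆ π n := by
        intro x hx
        have hchain := hJ x i j hx (hsub hx)
        obtain ⟨w', hw'⟩ :=
          chain_to_walk (G := P.graph) (S := {c | x ∈ π c}) hchain hx
        have heq : (w'.toPath : P.graph.Walk i j) = SimpleGraph.Walk.cons hadj q :=
          hw0u _ w'.toPath.2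
        have hnmem : n ∈ (w'.toPath : P.graph.Walk i j).support := by
          rw [heq]
          simp [SimpleGraph.Walk.support_cons]
        exact hw' n (SimpleGraph.Walk.support_toPath_subset w' hnmem)
      by_cases hni : π n ⊆ π i
      · -- contraction case : π i = π n ; contract the deeper one into its parent
        have heqπ : π i = π n := Finset.Subset.antisymm hn_all hni
        obtain ⟨c, f, hpc, hcf, hπcf⟩ : ∃ c f : ι, P.p c = f ∧ c ≠ f ∧ π c = π f := by
          rcases hadjP_in.2 with hpi | hpn
          · exact ⟨i, n, hpi, hadjP_in.1, heqπ⟩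
          · exact ⟨n, i, hpn, hadjP_in.1.symm, heqπ.symm⟩
        have hcr : c ≠ P.r := by
          intro h
          rw [h, P.root_fix] at hpc
          exact hcf (h.trans hpc)
        have hrρ : P.ρ c = P.ρ f + 1 := by
          have := P.rho_p hcr
          rwa [hpc] at this
        -- op C : redirect children of c to f, making c a childless leaf
        set p' : ι → ι := fun v => if P.p v = c ∧ v ≠ c then f else P.p v with hp'def
        have hp'c : p' c = f := by
          show (if P.p c = c ∧ c ≠ c then f else P.p c) = f
          rw [if_neg (fun h => h.2 rfl)]
          exact hpc
        have hp'r : p' P.r = P.r := by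
          show (if P.p P.r = c ∧ P.r ≠ c then f else P.p P.r) = P.r
          rw [if_neg ?_]
          · exact P.root_fix
          · rintro ⟨h1, h2⟩
            exact h2 (P.root_fix.symm.trans h1)
        have hcl : ∀ v, v ≠ c → p' v ≠ c := by
          intro v hv
          show (if P.p v = c ∧ v ≠ c then f else P.p v) ≠ c
          by_cases hcond : P.p v = c ∧ v ≠ c
          · rw [if_pos hcond]; exact fun h => hcf h.symm
          · rw [if_neg hcond]
            intro h
            exact hcond ⟨h, hv⟩
        have hρp' : ∀ v, v ≠ P.r → P.ρ (p' v) < P.ρ v := by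
          intro v hvr
          have hρ := P.rho_p hvr
          show P.ρ (if P.p v = c ∧ v ≠ c then f else P.p v) < P.ρ v
          by_cases hcond : P.p v = c ∧ v ≠ c
          · rw [if_pos hcond]
            have : P.ρ v = P.ρ c + 1 := by rw [hρ, hcond.1]
            omega
          · rw [if_neg hcond]; omega
        have hreach' : ∀ v, ∃ m, p'^[m] v = P.r := by
          intro v
          have key : ∀ N v, P.ρ v ≤ N → ∃ m, p'^[m] v = P.r := by
            intro N
            induction N with
            | zero =>
              intro v hv
              exact ⟨0, by simp [P.eq_r_of_rho_eq_zero (Nat.le_zero.mp hv)]⟩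
            | succ N ih =>
              intro v hv
              by_cases hvr : v = P.r
              · exact ⟨0, by simp [hvr]⟩
              · have := hρp' v hvr
                have hρ := P.rho_p hvr
                obtain ⟨m, hm⟩ := ih (p' v) (by omega)
                exact ⟨m + 1, by rw [Function.iterate_succ_apply]; exact hm⟩
          exact key (P.ρ v) v le_rfl
        set P' : PTree ι := ⟨P.r, p', hp'r, hreach'⟩ with hP'def
        have hf_ne : ∀ v', P.p v' = c → v' ≠ c → f ≠ v' := by
          intro v' hpv hvc heq
          subst heq
          have hfr : f ≠ P.r := by
            intro h
            rw [h, P.root_fix] at hpv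
            exact hcr hpv.symm
          have h2 : P.ρ f = P.ρ c + 1 := by
            have := P.rho_p hfr
            rwa [hpv] at this
          omega
        have hJ2 : JoinInvP P' π := by
          intro x a b hxa hxb
          have base := hJ x a b hxa hxb
          set R' := fun c' d => x ∈ π c' ∧ x ∈ π d ∧ P'.adjP c' d with hR'def
          have hR'symm : Symmetric R' := by
            rintro u v ⟨h1, h2, h3⟩
            exact ⟨h2, h1, P'.adjP_symm h3⟩
          have hstep : ∀ u, x ∈ π u →
              Relation.ReflTransGen R' u (if u = c then f else u) := by
            intro u hxu
            by_cases hu : u = c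
            · rw [if_pos hu]
              refine Relation.ReflTransGen.single ⟨hxu, hπcf ▸ (hu ▸ hxu), ?_, Or.inl ?_⟩
              · rw [hu]; exact hcf
              · show p' u = f
                rw [hu]; exact hp'c
            · rw [if_neg hu]
          have fstep : ∀ u v', (x ∈ π u ∧ x ∈ π v' ∧ P.adjP u v') →
              Relation.ReflTransGen R' (if u = c then f else u) (if v' = c then f else v') := by
            rintro u v' ⟨hxu, hxv, hne, hor⟩
            by_cases huc : u = c
            · rw [if_pos huc]
              by_cases hvc : v' = c
              · exact absurd (huc.trans hvc.symm) hne
              · rw [if_neg hvc]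
                rcases hor with h1 | h1
                · have h1' : f = v' := by rw [← hpc, ← huc]; exact h1
                  rw [← h1']
                · have h1' : P.p v' = c := h1.trans huc
                  have hp'v : p' v' = f := by
                    show (if P.p v' = c ∧ v' ≠ c then f else P.p v') = f
                    rw [if_pos ⟨h1', hvc⟩]
                  exact Relation.ReflTransGen.single
                    ⟨hπcf ▸ (huc ▸ hxu), hxv, hf_ne v' h1' hvc, Or.inr hp'v⟩
            · rw [if_neg huc]
              by_cases hvc : v' = c
              · rw [if_pos hvc]
                rcases hor with h1 | h1
                · have h1' : P.p u = c := h1.trans hvc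
                  have hp'u : p' u = f := by
                    show (if P.p u = c ∧ u ≠ c then f else P.p u) = f
                    rw [if_pos ⟨h1', huc⟩]
                  exact Relation.ReflTransGen.single
                    ⟨hxu, hπcf ▸ (hvc ▸ hxv), (hf_ne u h1' huc).symm, Or.inl hp'u⟩
                · have h1' : f = u := by rw [← hpc, ← hvc]; exact h1
                  rw [← h1']
              · rw [if_neg hvc]
                refine Relation.ReflTransGen.single ⟨hxu, hxv, hne, ?_⟩
                rcases hor with h1 | h1
                · left
                  show (if P.p u = c ∧ u ≠ c then f else P.p u) = v'
                  rw [if_neg (fun hcond => hvc (h1.symm.trans hcond.1))]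
                  exact h1
                · right
                  show (if P.p v' = c ∧ v' ≠ c then f else P.p v') = u
                  rw [if_neg (fun hcond => huc (h1.symm.trans hcond.1))]
                  exact h1
          have main := chain_lift (f := fun u => if u = c then f else u) fstep base
          exact (hstep a hxa).trans
            (main.trans (rtg_symm' hR'symm (hstep b hxb)))
        -- op A : delete the childless leaf c
        have hfc : f ≠ c := fun hh => hcf hh.symm
        let p'' : {v : ι // v ≠ c} → {v : ι // v ≠ c} := fun v => ⟨p' v.1, hcl v.1 v.2⟩
        have hiter : ∀ (m : ℕ) (v : {v : ι // v ≠ c}), (p''^[m] v).1 = p'^[m] v.1 := by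
          intro m
          induction m with
          | zero => intro v; rfl
          | succ m ih =>
            intro v
            rw [Function.iterate_succ_apply, Function.iterate_succ_apply]
            exact ih _
        have hreach'' : ∀ v : {v : ι // v ≠ c}, ∃ m, p''^[m] v = ⟨P.r, Ne.symm hcr⟩ := by
          intro v
          obtain ⟨m, hm⟩ := hreach' v.1
          exact ⟨m, Subtype.ext (by rw [hiter]; exact hm)⟩
        set P'' : PTree {v : ι // v ≠ c} :=
          ⟨⟨P.r, Ne.symm hcr⟩, p'', Subtype.ext hp'r, hreach''⟩ with hP''def
        set π'' : {v : ι // v ≠ c} → Finset α := fun v => π v.1 with hπ''def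
        have hJ3 : JoinInvP P'' π'' := by
          intro x a b hxa hxb
          have base := hJ2 x a.1 b.1 hxa hxb
          set R'' := fun c' d : {v : ι // v ≠ c} =>
            x ∈ π'' c' ∧ x ∈ π'' d ∧ P''.adjP c' d with hR''def
          set gmap : ι → {v : ι // v ≠ c} := fun u => if h : u = c then ⟨f, hfc⟩ else ⟨u, h⟩
            with hgmapdef
          have hgmap_ne : ∀ (u : ι) (hu : u ≠ c), gmap u = ⟨u, hu⟩ := fun u hu => dif_neg hu
          have hgmap_c : gmap c = ⟨f, hfc⟩ := dif_pos rfl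
          have fstep2 : ∀ u v', (x ∈ π u ∧ x ∈ π v' ∧ P'.adjP u v') →
              Relation.ReflTransGen R'' (gmap u) (gmap v') := by
            rintro u v' ⟨hxu, hxv, hne, hor⟩
            by_cases huc : u = c
            · by_cases hvc : v' = c
              · exact absurd (huc.trans hvc.symm) hne
              · have hvf : v' = f := by
                  rcases hor with h1 | h1
                  · have h1' : p' u = v' := h1
                    rw [huc, hp'c] at h1'
                    exact h1'.symm
                  · have h1' : p' v' = u := h1
                    exact absurd (h1'.trans huc) (hcl v' hvc)
                have hgg : gmap u = gmap v' := by
                  rw [huc, hgmap_c, hgmap_ne v' hvc]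
                  exact Subtype.ext hvf.symm
                rw [hgg]
            · by_cases hvc : v' = c
              · have huf : u = f := by
                  rcases hor with h1 | h1
                  · have h1' : p' u = v' := h1
                    exact absurd (h1'.trans hvc) (hcl u huc)
                  · have h1' : p' v' = u := h1
                    rw [hvc, hp'c] at h1'
                    exact h1'.symm
                have hgg : gmap u = gmap v' := by
                  rw [hvc, hgmap_c, hgmap_ne u huc]
                  exact Subtype.ext huf
                rw [hgg]
              · rw [hgmap_ne u huc, hgmap_ne v' hvc]
                refine Relation.ReflTransGen.single ⟨hxu, hxv, ?_, ?_⟩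
                · exact fun hh => hne (congrArg Subtype.val hh)
                · rcases hor with h1 | h1
                  · exact Or.inl (Subtype.ext h1)
                  · exact Or.inr (Subtype.ext h1)
          have main := chain_lift (f := gmap) fstep2 base
          rw [hgmap_ne a.1 a.2, hgmap_ne b.1 b.2] at main
          exact main
        have hc_term : 1 ≤ U.card + 1 - (π c).card := by
          have := Finset.card_le_card (hU c)
          omega
        have hsum_eq : ∑ v : {v : ι // v ≠ c}, (U.card + 1 - (π'' v).card)
            = ∑ v ∈ Finset.univ.erase c, (U.card + 1 - (π v).card) := by
          have h0 := Finset.sum_subtype (p := fun v : ι => v ≠ c) (F := inferInstance) (Finset.univ.erase c)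
            (fun x => by simp) (fun v => U.card + 1 - (π v).card)
          exact h0.symm
        have hsum_lt : ∑ v : {v : ι // v ≠ c}, (U.card + 1 - (π'' v).card)
            < ∑ k, (U.card + 1 - (π k).card) := by
          rw [hsum_eq]
          have h2 := Finset.sum_erase_add Finset.univ
            (fun v => U.card + 1 - (π v).card) (Finset.mem_univ c)
          omega
        obtain ⟨H'', hac, hrange, hcover, hanti⟩ :=
          IH _ (lt_of_lt_of_le hsum_lt hμ) {v : ι // v ≠ c} P'' π'' U
            (fun v => hU v.1) hJ3 le_rfl
        refine ⟨H'', hac, ?_, ?_, hanti⟩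
        · intro g hg
          obtain ⟨v, hv⟩ := hrange g hg
          exact ⟨v.1, hv⟩
        · intro u
          by_cases hu : u = c
          · obtain ⟨g, hg, hsub'⟩ := hcover ⟨f, hfc⟩
            exact ⟨g, hg, by rw [hu, hπcf]; exact hsub'⟩
          · obtain ⟨g, hg, hsub'⟩ := hcover ⟨u, hu⟩
            exact ⟨g, hg, hsub'⟩
      · -- op B : grow π i to π n
        have hne_in : i ≠ n := hadjP_in.1
        set π' := Function.update π i (π n) with hπ'def
        have hπ'i : π' i = π n := Function.update_self i (π n) π
        have hπ'k : ∀ k, k ≠ i → π' k = π k := fun k hk => Function.update_of_ne hk _ _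
        have hmono : ∀ k, π k ⊆ π' k := by
          intro k
          by_cases hk : k = i
          · subst hk; rw [hπ'i]; exact hn_all
          · rw [hπ'k k hk]
        have hU' : ∀ k, π' k ⊆ U := by
          intro k
          by_cases hk : k = i
          · subst hk; rw [hπ'i]; exact hU n
          · rw [hπ'k k hk]; exact hU k
        have hJ' : JoinInvP P π' := by
          intro x a b hxa hxb
          set R' := fun c d => x ∈ π' c ∧ x ∈ π' d ∧ P.adjP c d with hR'def
          have hsymmR' : Symmetric R' := by
            rintro u v ⟨h1, h2, h3⟩
            exact ⟨h2, h1, P.adjP_symm h3⟩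
          have upgrade : ∀ u v', (x ∈ π u ∧ x ∈ π v' ∧ P.adjP u v') →
              Relation.ReflTransGen R' u v' :=
            fun u v' h => Relation.ReflTransGen.single ⟨hmono u h.1, hmono v' h.2.1, h.2.2⟩
          have anchor : ∀ u, x ∈ π' u → ∃ u', x ∈ π u' ∧ Relation.ReflTransGen R' u u' := by
            intro u hxu
            by_cases hu : u = i
            · have hxu' : x ∈ π n := by
                have h0 := hxu
                rw [hu, hπ'i] at h0
                exact h0
              by_cases hxi : x ∈ π u
              · exact ⟨u, hxi, Relation.ReflTransGen.refl⟩
              · refine ⟨n, hxu', Relation.ReflTransGen.single ⟨hxu, ?_, ?_⟩⟩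
                · rw [hπ'k n hne_in.symm]; exact hxu'
                · rw [hu]; exact hadjP_in
            · refine ⟨u, ?_, Relation.ReflTransGen.refl⟩
              rwa [hπ'k u hu] at hxu
          obtain ⟨a', hxa', ha'⟩ := anchor a hxa
          obtain ⟨b', hxb', hb'⟩ := anchor b hxb
          have mid := chain_lift (f := fun u => u) (fun u v' h => upgrade u v' h)
            (hJ x a' b' hxa' hxb')
          exact ha'.trans (mid.trans (rtg_symm' hsymmR' hb'))
        have hlt : ∑ k, (U.card + 1 - (π' k).card) < ∑ k, (U.card + 1 - (π k).card) := by
          apply Finset.sum_lt_sum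
          · intro k _
            exact Nat.sub_le_sub_left (Finset.card_le_card (hmono k)) _
          · refine ⟨i, Finset.mem_univ i, ?_⟩
            have h1 := Finset.card_lt_card (HasSubset.Subset.ssubset_of_not_subset hn_all hni)
            have h2 := Finset.card_le_card (hU n)
            rw [hπ'i]
            omega
        obtain ⟨H'', hac, hrange, hcover, hanti⟩ :=
          IH _ (lt_of_lt_of_le hlt hμ) ι P π' U hU' hJ' le_rfl
        refine ⟨H'', hac, ?_, ?_, hanti⟩
        · intro g hg
          obtain ⟨k, hk⟩ := hrange g hg
          by_cases hki : k = i
          · exact ⟨n, by rw [← hk, hki, hπ'i]⟩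
          · exact ⟨k, by rw [← hk, hπ'k k hki]⟩
        · intro k
          obtain ⟨g, hg, hsub'⟩ := hcover k
          exact ⟨g, hg, (hmono k).trans hsub'⟩
  · -- injective antichain case : build the join tree
    have hinj : Function.Injective π := by
      intro a b hab
      by_contra hne
      exact hdb ⟨a, b, hne, hab.le⟩
    haveI : Nonempty ι := ⟨P.r⟩
    set H'' : HGraph α := ⟨Finset.univ.image π⟩ with hH''
    have hmem : ∀ i, π i ∈ H''.edges := fun i => Finset.mem_image_of_mem π (Finset.mem_univ i)
    let emap : ι → Hyperedge H'' := fun i => ⟨π i, hmem i⟩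
    have hbij : Function.Bijective emap := by
      constructor
      · intro a b hab
        exact hinj (congrArg Subtype.val hab)
      · intro g
        obtain ⟨i, -, hi⟩ := Finset.mem_image.mp g.2
        exact ⟨i, Subtype.ext hi⟩
    let e : ι ≃ Hyperedge H'' := Equiv.ofBijective emap hbij
    have hsymm_apply : ∀ g, e (e.symm g) = g := fun g => e.apply_symm_apply g
    have hval : ∀ g : Hyperedge H'', π (e.symm g) = g.1 :=
      fun g => congrArg Subtype.val (hsymm_apply g)
    let T'' : SimpleGraph (Hyperedge H'') := SimpleGraph.comap e.symm P.graph
    let iso : T'' ≃g P.graph := ⟨e.symm, Iff.rfl⟩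
    refine ⟨H'', ⟨⟨T'', ⟨?_, ?_⟩, ?_⟩⟩, ?_, ?_, ?_⟩
    · exact (SimpleGraph.Iso.connected_iff iso).mpr P.connected
    · intro v cyc hcyc
      exact P.acyclic _
        ((SimpleGraph.Walk.map_isCycle_iff_of_injective
          (f := iso.toHom) (fun a b hab => iso.toEquiv.injective hab)).mpr hcyc)
    · intro X a b
      have hXi : X ∈ π (e.symm a.1) := by rw [hval a.1]; exact a.2
      have hXj : X ∈ π (e.symm b.1) := by rw [hval b.1]; exact b.2
      have chain := hJ X (e.symm a.1) (e.symm b.1) hXi hXj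
      have lift : ∀ (u v : ι),
          Relation.ReflTransGen (fun c d => X ∈ π c ∧ X ∈ π d ∧ P.adjP c d) u v →
          ∀ (hu : X ∈ (e u).1) (hv : X ∈ (e v).1),
          (T''.induce {h : Hyperedge H'' | X ∈ h.1}).Reachable ⟨e u, hu⟩ ⟨e v, hv⟩ := by
        intro u v hch
        induction hch with
        | refl => intro hu hv; rfl
        | @tail u' v' hch' hstep ih =>
          intro hu hv
          have hmid : X ∈ (e u').1 := hstep.1
          refine (ih hu hmid).trans ?_
          have hadj2 : (T''.induce {h : Hyperedge H'' | X ∈ h.1}).Adj ⟨e u', hmid⟩ ⟨e v', hv⟩ := by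
            show T''.Adj (e u') (e v')
            show P.graph.Adj (e.symm (e u')) (e.symm (e v'))
            rw [e.symm_apply_apply, e.symm_apply_apply]
            exact hstep.2.2
          exact hadj2.reachable
      have final := lift (e.symm a.1) (e.symm b.1) chain
        (by rw [hsymm_apply a.1]; exact a.2) (by rw [hsymm_apply b.1]; exact b.2)
      have hea : (⟨e (e.symm a.1), by rw [hsymm_apply a.1]; exact a.2⟩ :
          {h : Hyperedge H'' | X ∈ h.1}) = a := Subtype.ext (hsymm_apply a.1)
      have heb : (⟨e (e.symm b.1), by rw [hsymm_apply b.1]; exact b.2⟩ :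
          {h : Hyperedge H'' | X ∈ h.1}) = b := Subtype.ext (hsymm_apply b.1)
      rw [hea, heb] at final
      exact final
    · intro g hg
      obtain ⟨i, -, hi⟩ := Finset.mem_image.mp hg
      exact ⟨i, hi⟩
    · intro i
      exact ⟨π i, hmem i, Finset.Subset.refl _⟩
    · intro g hg g' hg' hsub
      obtain ⟨a, -, ha⟩ := Finset.mem_image.mp hg
      obtain ⟨b, -, hb⟩ := Finset.mem_image.mp hg'
      by_cases hab : a = b
      · rw [← ha, ← hb, hab]
      · exact absurd ⟨a, b, hab, by rw [ha, hb]; exact hsub⟩ hdb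

end LemB

section Assembly

variable {α : Type*}

private lemma vpath_symm (H : HGraph α) (V : Set α) {X Y : α} (h : H.VPath V X Y) :
    H.VPath V Y X := by
  have hs : Symmetric (H.Adj V) := by
    rintro u v ⟨e, he, h1, h2, h3, h4⟩
    exact ⟨e, he, h2, h1, h4, h3⟩
  exact rtg_symm' hs h

private lemma adj_mono {H1 Ha : HGraph α} (hle : H1.HLe Ha) (V : Set α) {X Y : α}
    (h : H1.Adj V X Y) : Ha.Adj V X Y := by
  obtain ⟨e, he, h1, h2, h3, h4⟩ := h
  obtain ⟨e', he', hsube⟩ := hle e he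
  exact ⟨e', he', hsube h1, hsube h2, h3, h4⟩

private lemma vpath_mono {H1 Ha : HGraph α} (hle : H1.HLe Ha) (V : Set α) {X Y : α}
    (h : H1.VPath V X Y) : Ha.VPath V X Y :=
  chain_lift (f := fun x => x)
    (fun _ _ hab => Relation.ReflTransGen.single (adj_mono hle V hab)) h

private lemma nodes_mono {H1 Ha : HGraph α} (hle : H1.HLe Ha) : H1.nodes ⊆ Ha.nodes := by
  rintro x ⟨e, he, hx⟩
  obtain ⟨e', he', hsube⟩ := hle e he
  exact ⟨e', he', hsube hx⟩

/-- Key property of minimal tree projections: every hyperedge of `Ha`, restricted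
outside another hyperedge `h`, consists of nodes of `H1` which are pairwise
`[h]`-connected in `H1`. -/
private lemma crux {H1 H2 Ha : HGraph α}
    (hmin : IsMinimalTreeProjection H1 H2 Ha) {h : Finset α} (hh : h ∈ Ha.edges) :
    ∀ e ∈ Ha.edges, ∀ x ∈ e, x ∉ h →
      (x ∈ H1.nodes ∧ ∀ y ∈ e, y ∉ h → H1.VPath (↑h : Set α) x y) := by
  classical
  by_contra hK
  push_neg at hK
  obtain ⟨e_bad, he_bad, x_bad, hx_bad_mem, hx_bad_h, hbad⟩ := hK
  obtain ⟨⟨hAcyc, hle1, hle2⟩, hminimal⟩ := hmin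
  obtain ⟨JT⟩ := hAcyc
  set rootJT : Hyperedge Ha := ⟨h, hh⟩ with hrootdef
  obtain ⟨PJ, hPJr, hPJg⟩ := exists_ptree_of_isTree JT.isTree rootJT
  set N1 : Finset α := (H1.edges.sup id) \ h with hN1
  have hN1_mem : ∀ z, z ∈ N1 ↔ (z ∈ H1.nodes ∧ z ∉ h) := by
    intro z
    rw [hN1, Finset.mem_sdiff, Finset.mem_sup]
    constructor
    · rintro ⟨⟨e1, he1, hz⟩, hzh⟩
      exact ⟨⟨e1, he1, hz⟩, hzh⟩
    · rintro ⟨⟨e1, he1, hz⟩, hzh⟩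
      exact ⟨⟨e1, he1, hz⟩, hzh⟩
  set Cfin : α → Finset α := fun z => N1.filter (fun y => H1.VPath (↑h : Set α) z y) with hCfin
  have hCfin_mem : ∀ z y, y ∈ Cfin z ↔ (y ∈ N1 ∧ H1.VPath (↑h : Set α) z y) := by
    intro z y; rw [hCfin]; simp
  have hCfin_congr : ∀ z z', H1.VPath (↑h : Set α) z z' → Cfin z = Cfin z' := by
    intro z z' hp
    ext y
    rw [hCfin_mem, hCfin_mem]
    constructor
    · rintro ⟨h1, h2⟩; exact ⟨h1, (vpath_symm _ _ hp).trans h2⟩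
    · rintro ⟨h1, h2⟩; exact ⟨h1, hp.trans h2⟩
  set pick : Finset α → α := fun s => if hs : s.Nonempty then hs.choose else x_bad with hpickdef
  have hpick_mem : ∀ s : Finset α, s.Nonempty → pick s ∈ s := by
    intro s hs
    rw [hpickdef]
    simp only [dif_pos hs]
    exact hs.choose_spec
  set rep : α → α := fun z => pick (Cfin z) with hrepdef
  have hrep_congr : ∀ z z', Cfin z = Cfin z' → rep z = rep z' :=
    fun z z' heq => congrArg pick heq
  have hrep_mem : ∀ z ∈ N1, rep z ∈ Cfin z := by
    intro z hz
    exact hpick_mem _ ⟨z, (hCfin_mem z z).mpr ⟨hz, Relation.ReflTransGen.refl⟩⟩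
  set X0 : Finset α := N1.filter (fun z => rep z = z) with hX0
  have hrep_in_X0 : ∀ z ∈ N1, rep z ∈ X0 := by
    intro z hz
    have h1 := (hCfin_mem _ _).mp (hrep_mem z hz)
    rw [hX0, Finset.mem_filter]
    exact ⟨h1.1, hrep_congr _ _ (hCfin_congr _ _ (vpath_symm _ _ h1.2))⟩
  have hX0_disj : ∀ x x', x ∈ X0 → x' ∈ X0 → ∀ z, z ∈ Cfin x → z ∈ Cfin x' → x = x' := by
    intro x x' hx hx' z hz hz'
    rw [hX0, Finset.mem_filter] at hx hx'
    rw [hCfin_mem] at hz hz'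
    have hpp : H1.VPath (↑h : Set α) x x' := hz.2.trans (vpath_symm _ _ hz'.2)
    rw [← hx.2, ← hx'.2]
    exact hrep_congr _ _ (hCfin_congr x x' hpp)
  -- the index structure
  set pfun : Option (Hyperedge Ha × {z : α // z ∈ X0}) →
      Option (Hyperedge Ha × {z : α // z ∈ X0}) := fun v =>
    match v with
    | none => none
    | some (eh, z) => if eh = rootJT then none else some (PJ.p eh, z) with hpfun
  have hpfun_some : ∀ eh z, pfun (some (eh, z)) =
      (if eh = rootJT then none else some (PJ.p eh, z)) := fun _ _ => rfl
  have hreachP0 : ∀ v, ∃ m, pfun^[m] v = none := by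
    intro v
    rcases v with - | ⟨eh, z⟩
    · exact ⟨0, rfl⟩
    · obtain ⟨m, hm⟩ := PJ.reach eh
      have key : ∀ m (eh : Hyperedge Ha), PJ.p^[m] eh = PJ.r →
          ∃ k, pfun^[k] (some (eh, z)) = none := by
        intro m
        induction m with
        | zero =>
          intro eh h0
          rw [Function.iterate_zero_apply] at h0
          refine ⟨1, ?_⟩
          rw [Function.iterate_one, hpfun_some, if_pos (h0.trans hPJr)]
        | succ m ih =>
          intro eh h0
          by_cases he : eh = rootJT
          · exact ⟨1, by rw [Function.iterate_one, hpfun_some, if_pos he]⟩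
          · have h1 : PJ.p^[m] (PJ.p eh) = PJ.r := by
              rwa [← Function.iterate_succ_apply]
            obtain ⟨k, hk⟩ := ih (PJ.p eh) h1
            refine ⟨k + 1, ?_⟩
            rw [Function.iterate_succ_apply, hpfun_some, if_neg he]
            exact hk
      exact key m eh hm
  set P0 : PTree (Option (Hyperedge Ha × {z : α // z ∈ X0})) :=
    ⟨none, pfun, rfl, hreachP0⟩ with hP0
  set π0 : Option (Hyperedge Ha × {z : α // z ∈ X0}) → Finset α := fun v =>
    match v with
    | none => h
    | some (eh, z) => eh.1 ∩ (Cfin z.1 ∪ h) with hπ0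
  have hπ0_mem : ∀ eh (z : {z : α // z ∈ X0}) (w : α),
      w ∈ π0 (some (eh, z)) ↔ (w ∈ eh.1 ∧ (w ∈ Cfin z.1 ∨ w ∈ h)) := by
    intro eh z w
    show w ∈ eh.1 ∩ (Cfin z.1 ∪ h) ↔ _
    rw [Finset.mem_inter, Finset.mem_union]
  set U : Finset α := (Ha.edges.sup id) ∪ h with hUdef
  have hπ0U : ∀ v, π0 v ⊆ U := by
    intro v
    rcases v with - | ⟨eh, z⟩
    · exact Finset.subset_union_right
    · intro w hw
      rw [hπ0_mem] at hw
      apply Finset.mem_union_left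
      have := Finset.le_sup (f := id) eh.2
      exact this hw.1
  -- adjacency transfer
  have hTadj : ∀ a b : Hyperedge Ha, JT.T.Adj a b ↔ PJ.adjP a b := by
    intro a b; rw [← hPJg]; exact Iff.rfl
  have hlift_adj : ∀ (x : {z : α // z ∈ X0}) (a b : Hyperedge Ha), PJ.adjP a b →
      P0.adjP (some (a, x)) (some (b, x)) := by
    intro x a b hadjP
    refine ⟨?_, ?_⟩
    · intro hcontra
      apply hadjP.1
      have := Option.some.inj hcontra
      exact congrArg Prod.fst this
    · rcases hadjP.2 with h1 | h1
      · by_cases har : a = rootJT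
        · exfalso
          have hb : b = rootJT := by
            rw [← h1, har, ← hPJr, PJ.root_fix]
          exact hadjP.1 (har.trans hb.symm)
        · left
          show pfun (some (a, x)) = some (b, x)
          rw [hpfun_some, if_neg har, h1]
      · by_cases hbr : b = rootJT
        · exfalso
          have ha' : a = rootJT := by
            rw [← h1, hbr, ← hPJr, PJ.root_fix]
          exact hadjP.1 (ha'.trans hbr.symm)
        · right
          show pfun (some (b, x)) = some (a, x)
          rw [hpfun_some, if_neg hbr, h1]
  have copy_chain : ∀ (z : α) (x : {z' : α // z' ∈ X0}) (eh fh : Hyperedge Ha),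
      z ∈ eh.1 → z ∈ fh.1 → (z ∈ Cfin x.1 ∨ z ∈ h) →
      Relation.ReflTransGen (fun c d => z ∈ π0 c ∧ z ∈ π0 d ∧ P0.adjP c d)
        (some (eh, x)) (some (fh, x)) := by
    intro z x eh fh hze hzf hcond
    obtain ⟨w⟩ := JT.node_connected z
      (⟨eh, hze⟩ : {g : Hyperedge Ha | z ∈ g.1}) (⟨fh, hzf⟩ : {g : Hyperedge Ha | z ∈ g.1})
    have hchain := induce_walk_to_chain (G := JT.T) (S := {g : Hyperedge Ha | z ∈ g.1}) w
    refine chain_lift (f := fun g => some (g, x)) ?_ hchain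
    rintro a b ⟨ha, hb, hab⟩
    refine Relation.ReflTransGen.single ⟨?_, ?_, ?_⟩
    · exact (hπ0_mem a x z).mpr ⟨ha, hcond⟩
    · exact (hπ0_mem b x z).mpr ⟨hb, hcond⟩
    · exact hlift_adj x a b ((hTadj a b).mp hab)
  have hJ0 : JoinInvP P0 π0 := by
    intro z a b hza hzb
    have hsymmR : Symmetric (fun c d => z ∈ π0 c ∧ z ∈ π0 d ∧ P0.adjP c d) := by
      rintro u v ⟨h1, h2, h3⟩; exact ⟨h2, h1, P0.adjP_symm h3⟩
    have to_root : ∀ (eh : Hyperedge Ha) (x : {z' : α // z' ∈ X0}), z ∈ eh.1 → z ∈ h →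
        Relation.ReflTransGen (fun c d => z ∈ π0 c ∧ z ∈ π0 d ∧ P0.adjP c d)
          (some (eh, x)) none := by
      intro eh x hze hzh
      have hzr : z ∈ rootJT.1 := hzh
      have hc := copy_chain z x eh rootJT hze hzr (Or.inr hzh)
      refine hc.trans (Relation.ReflTransGen.single ⟨?_, ?_, ?_, Or.inl ?_⟩)
      · exact (hπ0_mem rootJT x z).mpr ⟨hzr, Or.inr hzh⟩
      · exact hzh
      · intro hcontra
        exact Option.some_ne_none _ hcontra
      · show pfun (some (rootJT, x)) = none
        rw [hpfun_some, if_pos rfl]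
    rcases a with - | ⟨eh, x⟩
    · rcases b with - | ⟨fh, y⟩
      · exact Relation.ReflTransGen.refl
      · exact rtg_symm' hsymmR
          (to_root fh y ((hπ0_mem fh y z).mp hzb).1 hza)
    · rcases b with - | ⟨fh, y⟩
      · exact to_root eh x ((hπ0_mem eh x z).mp hza).1 hzb
      · have hmema := (hπ0_mem eh x z).mp hza
        have hmemb := (hπ0_mem fh y z).mp hzb
        by_cases hxy : x = y
        · rw [hxy]
          rw [hxy] at hmema
          exact copy_chain z y eh fh hmema.1 hmemb.1 hmema.2
        · rcases hmema.2 with hca | hha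
          · rcases hmemb.2 with hcb | hhb
            · exact absurd (Subtype.ext (hX0_disj x.1 y.1 x.2 y.2 z hca hcb)) hxy
            · exact (to_root eh x hmema.1 hhb).trans
                (rtg_symm' hsymmR (to_root fh y hmemb.1 hhb))
          · exact (to_root eh x hmema.1 hha).trans
              (rtg_symm' hsymmR (to_root fh y hmemb.1 hha))
  obtain ⟨Ha', hac', hrange, hcover, hanti⟩ :=
    lemB (∑ v, (U.card + 1 - (π0 v).card)) _ P0 π0 U hπ0U hJ0 le_rfl
  have hTP : IsTreeProjection H1 H2 Ha' := by
    refine ⟨hac', ?_, ?_⟩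
    · intro e1 he1
      obtain ⟨e, he, hsube⟩ := hle1 e1 he1
      by_cases hout : ∃ w ∈ e1, w ∉ h
      · obtain ⟨w0, hw0, hw0h⟩ := hout
        have hw0N1 : w0 ∈ N1 := (hN1_mem w0).mpr ⟨⟨e1, he1, hw0⟩, hw0h⟩
        have hrepX0 : rep w0 ∈ X0 := hrep_in_X0 w0 hw0N1
        have hsub1 : e1 ⊆ π0 (some (⟨e, he⟩, ⟨rep w0, hrepX0⟩)) := by
          intro y hy
          rw [hπ0_mem]
          refine ⟨hsube hy, ?_⟩
          by_cases hyh : y ∈ h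
          · exact Or.inr hyh
          · left
            rw [hCfin_mem]
            have hyN1 : y ∈ N1 := (hN1_mem y).mpr ⟨⟨e1, he1, hy⟩, hyh⟩
            refine ⟨hyN1, ?_⟩
            have h1 : H1.VPath (↑h : Set α) w0 (rep w0) :=
              ((hCfin_mem w0 (rep w0)).mp (hrep_mem w0 hw0N1)).2
            have h2 : H1.VPath (↑h : Set α) w0 y :=
              Relation.ReflTransGen.single
                ⟨e1, he1, hw0, hy, by simpa using hw0h, by simpa using hyh⟩
            exact (vpath_symm _ _ h1).trans h2
        obtain ⟨g, hg, hsubg⟩ := hcover (some (⟨e, he⟩, ⟨rep w0, hrepX0⟩))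
        exact ⟨g, hg, hsub1.trans hsubg⟩
      · push_neg at hout
        obtain ⟨g, hg, hsubg⟩ := hcover none
        exact ⟨g, hg, fun y hy => hsubg (hout y hy)⟩
    · intro g hg
      obtain ⟨v, hv⟩ := hrange g hg
      rcases v with - | ⟨eh, x⟩
      · obtain ⟨h2e, hh2, hsub2⟩ := hle2 h hh
        exact ⟨h2e, hh2, hv ▸ hsub2⟩
      · obtain ⟨h2e, hh2, hsub2⟩ := hle2 eh.1 eh.2
        refine ⟨h2e, hh2, ?_⟩
        rw [← hv]
        exact fun y hy => hsub2 (Finset.mem_of_mem_inter_left hy)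
  have hbad_not : e_bad ∉ Ha'.edges := by
    intro hin
    obtain ⟨v, hv⟩ := hrange e_bad hin
    rcases v with - | ⟨eh, x⟩
    · have : e_bad = h := hv.symm
      rw [this] at hx_bad_mem
      exact hx_bad_h hx_bad_mem
    · have hx_in : x_bad ∈ Cfin x.1 := by
        have h0 := hx_bad_mem
        rw [← hv, hπ0_mem] at h0
        rcases h0.2 with hc | hh'
        · exact hc
        · exact absurd hh' hx_bad_h
      have hx_n1 := (hCfin_mem _ _).mp hx_in
      obtain ⟨y, hy, hyh, hnp⟩ := hbad ((hN1_mem x_bad).mp hx_n1.1).1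
      apply hnp
      have hy_in : y ∈ Cfin x.1 := by
        have h0 := hy
        rw [← hv, hπ0_mem] at h0
        rcases h0.2 with hc | hh'
        · exact hc
        · exact absurd hh' hyh
      have hy_n1 := (hCfin_mem _ _).mp hy_in
      exact (vpath_symm _ _ hx_n1.2).trans hy_n1.2
  have hPC : HGraph.ProperlyContained Ha' Ha := by
    constructor
    · intro g hg hgnot
      obtain ⟨v, hv⟩ := hrange g hg
      rcases v with - | ⟨eh, x⟩
      · have hg2 : g = h := hv.symm
        rw [hg2] at hgnot
        exact absurd hh hgnot
      · refine ⟨eh.1, eh.2, ?_, ?_⟩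
        · intro hcontra
          have heq2 := hanti g hg eh.1 hcontra (by rw [← hv]; exact Finset.inter_subset_left)
          rw [heq2] at hgnot
          exact hgnot eh.2
        · rw [← hv]; exact Finset.inter_subset_left
    · intro heq
      rw [heq] at hbad_not
      exact hbad_not he_bad
  exact hminimal Ha' hTP hPC

end Assembly

end

theorem minimal_tp_components_preserved {α : Type*} (H1 H2 Ha : HGraph α)
    (hmin : IsMinimalTreeProjection H1 H2 Ha) :
    ∀ h ∈ Ha.edges, ∀ C : Set α,
      Ha.IsComponent (h : Set α) C ↔ H1.IsComponent (h : Set α) C := by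
  intro h hh C
  have hle1 : H1.HLe Ha := hmin.1.2.1
  have K := crux hmin hh
  have hstep : ∀ X Y : α, Ha.Adj (↑h : Set α) X Y → H1.VPath (↑h : Set α) X Y := by
    rintro X Y ⟨e, he, hXe, hYe, hXh, hYh⟩
    exact (K e he X hXe (by simpa using hXh)).2 Y hYe (by simpa using hYh)
  have hpath : ∀ X Y : α, Ha.VPath (↑h : Set α) X Y → H1.VPath (↑h : Set α) X Y := by
    intro X Y hp
    exact chain_lift (f := fun x => x) (fun a b hab => hstep a b hab) hp
  have hsetdiff : Ha.nodes \ (↑h : Set α) = H1.nodes \ (↑h : Set α) := by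
    ext X
    constructor
    · rintro ⟨⟨e, he, hXe⟩, h2⟩
      exact ⟨(K e he X hXe (by simpa using h2)).1, h2⟩
    · rintro ⟨h1, h2⟩
      exact ⟨nodes_mono hle1 h1, h2⟩
  constructor
  · rintro ⟨hne, hsub, hconn, hmax⟩
    refine ⟨hne, hsetdiff ▸ hsub, ?_, ?_⟩
    · intro X hX Y hY
      exact hpath X Y (hconn X hX Y hY)
    · intro C' hCC' hC'sub hC'conn
      refine hmax C' hCC' (hsetdiff.symm ▸ hC'sub) ?_
      intro X hX Y hY
      exact vpath_mono hle1 _ (hC'conn X hX Y hY)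
  · rintro ⟨hne, hsub, hconn, hmax⟩
    refine ⟨hne, hsetdiff.symm ▸ hsub, ?_, ?_⟩
    · intro X hX Y hY
      exact vpath_mono hle1 _ (hconn X hX Y hY)
    · intro C' hCC' hC'sub hC'conn
      refine hmax C' hCC' (hsetdiff ▸ hC'sub) ?_
      intro X hX Y hY
      exact hpath X Y (hC'conn X hX Y hY)
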